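/- Let a ∈ ℝ², let d ∈ ℝ² be a unit vector, let φ ∈ (0, π/3], Δ ∈ (0, 1], and let ε satisfy 0 < ε and 3ε ≤ Δ. Set k := |L(ε)|. Then for every integer ℓ with 4 ≤ ℓ ≤ k − 1, the number of ε-granular states of size ℓ satisfies |A^ℓ(ε)| ≥ C(k−3, ℓ−3) ≥ k − 3, where C(·,·) denotes the binomial coefficient. -/

import Mathlib

open Real Set

/-- Map an angle in `(-π, π]` (as returned by `Complex.arg`) to `[0, 2π)`. -/
noncomputable def toCCW (θ : ℝ) : ℝ := if 0 ≤ θ then θ else θ + 2 * Real.pi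

/-- The counterclockwise angle from `w` to `z` (as vectors in `ℝ² = ℂ`), in `[0, 2π)`. -/
noncomputable def ccwAngle (w z : ℂ) : ℝ := toCCW ((z / w).arg)

/-- The drawing hull `H(a, d, φ, Δ)`: all points within distance `Δ` of the anchor `a`
whose counterclockwise angle (measured from direction `d`) lies in `[0, φ)`,
together with the anchor itself. -/
noncomputable def dhull (a d : ℂ) (φ Δ : ℝ) : Set ℂ :=
  {a} ∪ {x : ℂ | dist x a ≤ Δ ∧ ccwAngle d (x - a) ∈ Set.Ico 0 φ}

/-- The `ε`-granular locations `L(ε)` of a drawing hull: the anchor together with the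
nonnegative `2ε`-grid with origin `a + ε•d`, `x`-axis direction `d` (and `y`-axis
direction `d` rotated counterclockwise by `π/2`, i.e. `I * d`), intersected with the hull. -/
noncomputable def dlocs (a d : ℂ) (φ Δ ε : ℝ) : Set ℂ :=
  ({a} ∪ {x : ℂ | ∃ i j : ℕ,
      x = a + ((1 + 2 * (i : ℝ)) * ε) • d + (2 * (j : ℝ) * ε) • (Complex.I * d)})
    ∩ dhull a d φ Δ

/-- The defining triples `T(ε)`: `{a, a + ε•d, a + (1+2i)ε•d}` for `i ≥ 1` with `(1+2i)ε ≤ Δ`. -/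
noncomputable def dtriples (a d : ℂ) (Δ ε : ℝ) : Set (Set ℂ) :=
  {T : Set ℂ | ∃ i : ℕ, 1 ≤ i ∧ (1 + 2 * (i : ℝ)) * ε ≤ Δ ∧
    T = {a, a + ε • d, a + ((1 + 2 * (i : ℝ)) * ε) • d}}

/-- The `ε`-granular states `A(ε) = {S ∪ T : S ⊆ L(ε), T ∈ T(ε)}`. -/
noncomputable def dstates (a d : ℂ) (φ Δ ε : ℝ) : Set (Set ℂ) :=
  {U : Set ℂ | ∃ S ⊆ dlocs a d φ Δ ε, ∃ T ∈ dtriples a d Δ ε, U = S ∪ T}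

/-- The `ε`-granular states of size `ℓ`, `A^ℓ(ε)`. -/
noncomputable def dstatesOfSize (a d : ℂ) (φ Δ ε : ℝ) (ℓ : ℕ) : Set (Set ℂ) :=
  {U ∈ dstates a d φ Δ ε | U.ncard = ℓ}

/-- With `k := |L(ε)|`, for every `ℓ` with `4 ≤ ℓ ≤ k - 1`, the number of
`ε`-granular states of size `ℓ` is at least `C(k-3, ℓ-3)`, which is at least `k - 3`. -/
lemma mem_dlocs_of (a d : ℂ) (hd : ‖d‖ = 1) (φ Δ ε : ℝ) (hφ : 0 < φ)
    (hε : 0 < ε) (i : ℕ) (hi : (1 + 2 * (i : ℝ)) * ε ≤ Δ) :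
    a + ((1 + 2 * (i : ℝ)) * ε) • d ∈ dlocs a d φ Δ ε := by
  have hd0 : d ≠ 0 := by intro h; rw [h] at hd; simp at hd
  have hc : (0:ℝ) ≤ (1 + 2 * (i : ℝ)) * ε := by positivity
  constructor
  · right
    exact ⟨i, 0, by push_cast; ring_nf; simp⟩
  · right
    constructor
    · have : dist (a + ((1 + 2 * (i : ℝ)) * ε) • d) a = ‖((1 + 2 * (i : ℝ)) * ε) • d‖ := by
        rw [dist_eq_norm]; ring_nf
      rw [this, norm_smul, hd, mul_one, Real.norm_eq_abs, abs_of_nonneg hc]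
      exact hi
    · have h1 : a + ((1 + 2 * (i : ℝ)) * ε) • d - a = (((1 + 2 * (i : ℝ)) * ε : ℝ) : ℂ) * d := by
        rw [Complex.real_smul]; ring
      rw [ccwAngle, h1, mul_div_assoc, div_self hd0, mul_one,
        Complex.arg_ofReal_of_nonneg hc]
      simp [toCCW]
      exact hφ

lemma dlocs_finite (a d : ℂ) (hd : ‖d‖ = 1) (φ Δ ε : ℝ) (hΔ : 0 < Δ) (hε : 0 < ε) :
    (dlocs a d φ Δ ε).Finite := by
  set M := ⌈Δ / ε⌉₊ with hM
  apply Set.Finite.subset (s := {a} ∪ (fun p : ℕ × ℕ =>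
    a + ((1 + 2 * (p.1 : ℝ)) * ε) • d + (2 * (p.2 : ℝ) * ε) • (Complex.I * d)) ''
      (Set.Iic M ×ˢ Set.Iic M))
  · exact (Set.finite_singleton a).union
      (((Set.finite_Iic M).prod (Set.finite_Iic M)).image _)
  · rintro x ⟨hgrid, hhull⟩
    rcases hgrid with hxa | ⟨i, j, rfl⟩
    · left; exact hxa
    · right
      have hdist : dist (a + ((1 + 2 * (i : ℝ)) * ε) • d + (2 * (j : ℝ) * ε) • (Complex.I * d)) a ≤ Δ := by
        rcases hhull with hxa | ⟨h1, -⟩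
        · rw [Set.mem_singleton_iff] at hxa; rw [hxa]; simp [le_of_lt hΔ]
        · exact h1
      set X : ℝ := (1 + 2 * (i : ℝ)) * ε with hX
      set Y : ℝ := 2 * (j : ℝ) * ε with hY
      have hXnn : 0 ≤ X := by positivity
      have hYnn : 0 ≤ Y := by positivity
      have hsub : a + X • d + Y • (Complex.I * d) - a = ((X : ℂ) + (Y : ℂ) * Complex.I) * d := by
        rw [Complex.real_smul, Complex.real_smul]; ring
      have habs : dist (a + X • d + Y • (Complex.I * d)) a = Real.sqrt (X ^ 2 + Y ^ 2) := by
        rw [Complex.dist_eq, hsub, norm_mul, hd, mul_one,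
          Complex.norm_add_mul_I]
      rw [habs] at hdist
      have hsq := Real.sq_sqrt (show (0:ℝ) ≤ X ^ 2 + Y ^ 2 by positivity)
      have hnn := Real.sqrt_nonneg (X ^ 2 + Y ^ 2)
      have hXle : X ≤ Δ := by nlinarith
      have hYle : Y ≤ Δ := by nlinarith
      have hiM : i ≤ M := by
        have h1 : (i : ℝ) ≤ Δ / ε := by
          rw [le_div_iff₀ hε]; nlinarith
        have h2 : (i : ℝ) ≤ (M : ℝ) := h1.trans (Nat.le_ceil _)
        exact_mod_cast h2
      have hjM : j ≤ M := by
        have h1 : (j : ℝ) ≤ Δ / ε := by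
          rw [le_div_iff₀ hε]; nlinarith
        have h2 : (j : ℝ) ≤ (M : ℝ) := h1.trans (Nat.le_ceil _)
        exact_mod_cast h2
      exact ⟨(i, j), ⟨hiM, hjM⟩, rfl⟩

lemma le_choose_aux : ∀ n r : ℕ, 1 ≤ r → r + 1 ≤ n → n ≤ n.choose r := by
  intro n
  induction n with
  | zero => intro r h1 h2; omega
  | succ m ih =>
    intro r h1 h2
    rcases Nat.eq_or_lt_of_le h2 with he | hl
    · have hr : r = m := by omega
      subst hr
      rw [Nat.choose_succ_self_right]
    · cases r with
      | zero => omega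
      | succ s =>
        rw [Nat.choose_succ_succ]
        have h3 : s + 1 + 1 ≤ m := by omega
        have h4 := ih (s + 1) h1 h3
        have hpos : 1 ≤ m.choose s := Nat.choose_pos (by omega)
        simp only [Nat.succ_eq_add_one] at *
        omega
theorem card_states_ge (a d : ℂ) (hd : ‖d‖ = 1) (φ Δ ε : ℝ)
    (hφ : φ ∈ Set.Ioc 0 (π / 3)) (hΔ : Δ ∈ Set.Ioc (0 : ℝ) 1)
    (hε : 0 < ε) (hεΔ : 3 * ε ≤ Δ)
    (k : ℕ) (hk : k = (dlocs a d φ Δ ε).ncard)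
    (ℓ : ℕ) (hℓ : 4 ≤ ℓ) (hℓk : ℓ ≤ k - 1) :
    Nat.choose (k - 3) (ℓ - 3) ≤ (dstatesOfSize a d φ Δ ε ℓ).ncard ∧
      k - 3 ≤ Nat.choose (k - 3) (ℓ - 3) := by
  classical
  obtain ⟨hφ0, hφ3⟩ := hφ
  obtain ⟨hΔ0, hΔ1⟩ := hΔ
  have hd0 : d ≠ 0 := by intro h; rw [h] at hd; simp at hd
  have hFin : (dlocs a d φ Δ ε).Finite := dlocs_finite a d hd φ Δ ε hΔ0 hε
  have hmem : ∀ i : ℕ, (1 + 2 * (i : ℝ)) * ε ≤ Δ →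
      a + ((1 + 2 * (i : ℝ)) * ε) • d ∈ dlocs a d φ Δ ε :=
    fun i hi => mem_dlocs_of a d hd φ Δ ε hφ0 hε i hi
  have ha : a ∈ dlocs a d φ Δ ε := ⟨Or.inl rfl, Or.inl rfl⟩
  have h1 : a + ε • d ∈ dlocs a d φ Δ ε := by
    have := hmem 0 (by push_cast; linarith)
    norm_num at this
    exact this
  have h3 : a + ((1 + 2 * ((1 : ℕ) : ℝ)) * ε) • d ∈ dlocs a d φ Δ ε :=
    hmem 1 (by push_cast; linarith)
  set p1 : ℂ := a + ε • d with hp1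
  set p3 : ℂ := a + ((1 + 2 * ((1 : ℕ) : ℝ)) * ε) • d with hp3
  have hsmul_ne : ∀ c : ℝ, c ≠ 0 → c • d ≠ 0 := by
    intro c hc h
    rcases smul_eq_zero.mp h with h | h
    · exact hc h
    · exact hd0 h
  have hne1 : a ≠ p1 := fun h => hsmul_ne ε hε.ne' (left_eq_add.mp h)
  have hne3 : a ≠ p3 := fun h =>
    hsmul_ne _ (by push_cast; nlinarith) (left_eq_add.mp h)
  have hne13 : p1 ≠ p3 := by
    intro h
    have h' : ε • d = ((1 + 2 * ((1 : ℕ) : ℝ)) * ε) • d := add_left_cancel h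
    have : (ε - (1 + 2 * ((1 : ℕ) : ℝ)) * ε) • d = 0 := by
      rw [sub_smul, h', sub_self]
    exact hsmul_ne _ (by push_cast; nlinarith) this
  -- Finsets
  set F : Finset ℂ := hFin.toFinset with hF
  have hFcoe : (↑F : Set ℂ) = dlocs a d φ Δ ε := hFin.coe_toFinset
  have hFcard : F.card = k := by
    rw [hk, Set.ncard_eq_toFinset_card _ hFin]
  set T0 : Finset ℂ := {a, p1, p3} with hT0
  have hT0card : T0.card = 3 := Finset.card_eq_three.mpr ⟨a, p1, p3, hne1, hne3, hne13, rfl⟩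
  have hT0F : T0 ⊆ F := by
    intro x hx
    rw [hF, Set.Finite.mem_toFinset]
    simp only [hT0, Finset.mem_insert, Finset.mem_singleton] at hx
    rcases hx with rfl | rfl | rfl
    · exact ha
    · exact h1
    · exact h3
  set G : Finset ℂ := F \ T0 with hG
  have hGcard : G.card = k - 3 := by
    rw [hG, Finset.card_sdiff_of_subset hT0F, hFcard, hT0card]
  have hT0coe : (↑T0 : Set ℂ) ∈ dtriples a d Δ ε := by
    refine ⟨1, le_refl 1, by push_cast; linarith, ?_⟩
    simp [hT0, hp1, hp3]
  have hTsubL : ∀ T ∈ dtriples a d Δ ε, T ⊆ dlocs a d φ Δ ε := by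
    rintro T ⟨i, hi1, hiΔ, rfl⟩ x hx
    rcases hx with rfl | rfl | rfl
    · exact ha
    · exact h1
    · exact hmem i hiΔ
  have hstatesFin : (dstatesOfSize a d φ Δ ε ℓ).Finite := by
    apply hFin.finite_subsets.subset
    rintro U ⟨⟨S, hS, T, hT, rfl⟩, -⟩
    exact Set.union_subset hS (hTsubL T hT)
  -- the image family
  set P : Finset (Set ℂ) :=
    (G.powersetCard (ℓ - 3)).image (fun s => ((s ∪ T0 : Finset ℂ) : Set ℂ)) with hP
  have hdisj : ∀ s ∈ G.powersetCard (ℓ - 3), Disjoint s T0 := by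
    intro s hs
    have hsG : s ⊆ G := (Finset.mem_powersetCard.mp hs).1
    exact (Finset.subset_sdiff.mp (hsG.trans (le_refl G))).2
  have hinj : Set.InjOn (fun s : Finset ℂ => ((s ∪ T0 : Finset ℂ) : Set ℂ))
      (G.powersetCard (ℓ - 3)) := by
    intro s hs t ht h
    have h' : s ∪ T0 = t ∪ T0 := Finset.coe_inj.mp h
    have := Finset.union_sdiff_cancel_right (hdisj s hs)
    have ht' := Finset.union_sdiff_cancel_right (hdisj t ht)
    rw [← this, ← ht', h']
  have hPsub : (↑P : Set (Set ℂ)) ⊆ dstatesOfSize a d φ Δ ε ℓ := by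
    intro U hU
    simp only [hP, Finset.coe_image, Set.mem_image, Finset.mem_coe] at hU
    obtain ⟨s, hs, rfl⟩ := hU
    obtain ⟨hsG, hscard⟩ := Finset.mem_powersetCard.mp hs
    refine ⟨⟨↑s, ?_, ↑T0, hT0coe, by rw [Finset.coe_union]⟩, ?_⟩
    · rw [← hFcoe]
      exact_mod_cast hsG.trans (Finset.sdiff_subset)
    · rw [Set.ncard_coe_finset, Finset.card_union_of_disjoint (hdisj s hs), hscard, hT0card]
      omega
  have hPcard : P.card = Nat.choose (k - 3) (ℓ - 3) := by
    rw [hP, Finset.card_image_of_injOn hinj, Finset.card_powersetCard, hGcard]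
  constructor
  · calc Nat.choose (k - 3) (ℓ - 3) = (↑P : Set (Set ℂ)).ncard := by
          rw [Set.ncard_coe_finset, hPcard]
    _ ≤ _ := Set.ncard_le_ncard hPsub hstatesFin
  · exact le_choose_aux (k - 3) (ℓ - 3) (by omega) (by omega)
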